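/- Let S be the set of nonnegative integers whose base-3 expansion has an even number of nonzero digits, and let f(z) = 1 + Σ_{i∈S} z^i ∈ ℂ[[z]]. Then f satisfies the functional equation (z² + z − 1)·f(z³) + f(z) − (z + z²)/(1 − z³) = 0, i.e., (1 − z³)·(z² + z − 1)·f(z³) + (1 − z³)·f(z) = z + z². -/

import Mathlib

open PowerSeries

/-- Substitution `z ↦ z^m` in a formal power series. -/
noncomputable def psSubstPow (m : ℕ) (g : PowerSeries ℂ) : PowerSeries ℂ :=
  PowerSeries.mk fun n => if m ∣ n then PowerSeries.coeff (n / m) g else 0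

noncomputable def Acoef (i : ℕ) : ℂ :=
  if Even (((Nat.digits 3 i).filter (fun d => d ≠ 0)).length) then (1 : ℂ) else 0

lemma Acoef_zero : Acoef 0 = 1 := by simp [Acoef]

lemma Acoef_mul3 (k : ℕ) : Acoef (3 * k) = Acoef k := by
  rcases Nat.eq_zero_or_pos k with rfl | hk
  · simp
  · unfold Acoef
    rw [Nat.digits_def' (by norm_num) (by omega)]
    simp [Nat.mul_div_cancel_left, Nat.mul_mod_right]

lemma Acoef_mul3_add1 (k : ℕ) : Acoef (3 * k + 1) = 1 - Acoef k := by
  unfold Acoef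
  rw [Nat.digits_def' (by norm_num) (by omega)]
  have h1 : (3 * k + 1) % 3 = 1 := by omega
  have h2 : (3 * k + 1) / 3 = k := by omega
  rw [h1, h2]
  simp only [List.filter_cons]
  norm_num [Nat.even_add_one]
  split_ifs with hA hB hC
  · exact absurd hB (Nat.not_even_iff_odd.mpr hA)
  · norm_num
  · norm_num
  · exact absurd (Nat.even_or_odd _) (by tauto)

lemma Acoef_mul3_add2 (k : ℕ) : Acoef (3 * k + 2) = 1 - Acoef k := by
  unfold Acoef
  rw [Nat.digits_def' (by norm_num) (by omega)]
  have h1 : (3 * k + 2) % 3 = 2 := by omega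
  have h2 : (3 * k + 2) / 3 = k := by omega
  rw [h1, h2]
  simp only [List.filter_cons]
  norm_num [Nat.even_add_one]
  split_ifs with hA hB hC
  · exact absurd hB (Nat.not_even_iff_odd.mpr hA)
  · norm_num
  · norm_num
  · exact absurd (Nat.even_or_odd _) (by tauto)

lemma Acoef_one : Acoef 1 = 0 := by
  have := Acoef_mul3_add1 0; simpa [Acoef_zero] using this

lemma Acoef_two : Acoef 2 = 0 := by
  have := Acoef_mul3_add2 0; simpa [Acoef_zero] using this

lemma Acoef_three : Acoef 3 = 0 := by
  have := Acoef_mul3 1; simpa [Acoef_one] using this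

lemma Acoef_four : Acoef 4 = 1 := by
  have := Acoef_mul3_add1 1; simpa [Acoef_one] using this

lemma Acoef_five : Acoef 5 = 1 := by
  have := Acoef_mul3_add2 1; simpa [Acoef_one] using this

/-- The generating series `f(z) = 1 + Σ_{i ∈ S} z^i` of the set `S` of nonnegative
integers with an even number of nonzero base-3 digits (note `0 ∈ S`, giving the constant
term `1`) satisfies `(1 − z³)(z² + z − 1) f(z³) + (1 − z³) f(z) = z + z²`. -/
theorem stmt10 (f : PowerSeries ℂ)
    (hf : f = PowerSeries.mk fun i =>
      if Even (((Nat.digits 3 i).filter (fun d => d ≠ 0)).length) then (1 : ℂ) else 0) :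
    (1 - PowerSeries.X ^ 3) * (PowerSeries.X ^ 2 + PowerSeries.X - 1) * psSubstPow 3 f
      + (1 - PowerSeries.X ^ 3) * f
      = PowerSeries.X + PowerSeries.X ^ 2 := by
  set g := psSubstPow 3 f with hgdef
  have hfc : ∀ n, PowerSeries.coeff n f = Acoef n := by
    intro n; rw [hf]; simp [Acoef]
  have hgc : ∀ n, PowerSeries.coeff n g =
      if 3 ∣ n then Acoef (n / 3) else 0 := by
    intro n
    rw [hgdef]
    simp only [psSubstPow, coeff_mk, hfc]
  have h1 : (1 - PowerSeries.X ^ 3) * (PowerSeries.X ^ 2 + PowerSeries.X - 1) * g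
      + (1 - PowerSeries.X ^ 3) * f
      = (PowerSeries.X ^ 2 * g + PowerSeries.X ^ 1 * g + PowerSeries.X ^ 3 * g + f)
        - (g + PowerSeries.X ^ 5 * g + PowerSeries.X ^ 4 * g + PowerSeries.X ^ 3 * f) := by
    ring
  rw [h1]
  ext n
  simp only [map_sub, map_add, PowerSeries.coeff_X_pow_mul', hgc, hfc,
    PowerSeries.coeff_X, map_pow, PowerSeries.coeff_X_pow]
  obtain ⟨q, hq⟩ : ∃ q, n = 3 * q ∨ n = 3 * q + 1 ∨ n = 3 * q + 2 := ⟨n / 3, by omega⟩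
  rcases hq with rfl | rfl | rfl
  · rcases q with _ | _ | q
    · norm_num [Acoef_zero]
    · norm_num [Acoef_zero, Acoef_one, Acoef_three]
    · have e : 3 * (q + 1 + 1) = 3 * q + 6 := by ring
      rw [e]
      simp only [show 3 * q + 6 - 2 = 3 * q + 4 from by omega,
        show 3 * q + 6 - 1 = 3 * q + 5 from by omega,
        show 3 * q + 6 - 3 = 3 * q + 3 from by omega,
        show 3 * q + 6 - 5 = 3 * q + 1 from by omega,
        show 3 * q + 6 - 4 = 3 * q + 2 from by omega,
        show (2 : ℕ) ≤ 3 * q + 6 from by omega,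
        show (1 : ℕ) ≤ 3 * q + 6 from by omega,
        show (3 : ℕ) ≤ 3 * q + 6 from by omega,
        show (5 : ℕ) ≤ 3 * q + 6 from by omega,
        show (4 : ℕ) ≤ 3 * q + 6 from by omega,
        show ¬ (3 ∣ 3 * q + 4) from by omega,
        show ¬ (3 ∣ 3 * q + 5) from by omega,
        show (3 ∣ 3 * q + 3) from by omega,
        show (3 ∣ 3 * q + 6) from by omega,
        show ¬ (3 ∣ 3 * q + 1) from by omega,
        show ¬ (3 ∣ 3 * q + 2) from by omega,
        show (3 * q + 3) / 3 = q + 1 from by omega,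
        show (3 * q + 6) / 3 = q + 2 from by omega,
        show ¬ (3 * q + 6 = 1) from by omega,
        show ¬ (3 * q + 6 = 2) from by omega,
        if_true, if_false, ite_true, ite_false]
      rw [show 3 * q + 6 = 3 * (q + 2) from by ring,
        show 3 * q + 3 = 3 * (q + 1) from by ring, Acoef_mul3, Acoef_mul3]
      ring
  · rcases q with _ | _ | q
    · norm_num [Acoef_zero, Acoef_one]
    · norm_num [Acoef_zero, Acoef_one, Acoef_four]
    · have e : 3 * (q + 1 + 1) + 1 = 3 * q + 7 := by ring
      rw [e]
      simp only [show 3 * q + 7 - 2 = 3 * q + 5 from by omega,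
        show 3 * q + 7 - 1 = 3 * q + 6 from by omega,
        show 3 * q + 7 - 3 = 3 * q + 4 from by omega,
        show 3 * q + 7 - 5 = 3 * q + 2 from by omega,
        show 3 * q + 7 - 4 = 3 * q + 3 from by omega,
        show (2 : ℕ) ≤ 3 * q + 7 from by omega,
        show (1 : ℕ) ≤ 3 * q + 7 from by omega,
        show (3 : ℕ) ≤ 3 * q + 7 from by omega,
        show (5 : ℕ) ≤ 3 * q + 7 from by omega,
        show (4 : ℕ) ≤ 3 * q + 7 from by omega,
        show ¬ (3 ∣ 3 * q + 5) from by omega,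
        show (3 ∣ 3 * q + 6) from by omega,
        show ¬ (3 ∣ 3 * q + 4) from by omega,
        show ¬ (3 ∣ 3 * q + 7) from by omega,
        show ¬ (3 ∣ 3 * q + 2) from by omega,
        show (3 ∣ 3 * q + 3) from by omega,
        show (3 * q + 6) / 3 = q + 2 from by omega,
        show (3 * q + 3) / 3 = q + 1 from by omega,
        show ¬ (3 * q + 7 = 1) from by omega,
        show ¬ (3 * q + 7 = 2) from by omega,
        if_true, if_false, ite_true, ite_false]
      rw [show 3 * q + 7 = 3 * (q + 2) + 1 from by ring,
        show 3 * q + 4 = 3 * (q + 1) + 1 from by ring, Acoef_mul3_add1, Acoef_mul3_add1]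
      ring
  · rcases q with _ | _ | q
    · norm_num [Acoef_zero, Acoef_two]
    · norm_num [Acoef_zero, Acoef_one, Acoef_two, Acoef_five]
    · have e : 3 * (q + 1 + 1) + 2 = 3 * q + 8 := by ring
      rw [e]
      simp only [show 3 * q + 8 - 2 = 3 * q + 6 from by omega,
        show 3 * q + 8 - 1 = 3 * q + 7 from by omega,
        show 3 * q + 8 - 3 = 3 * q + 5 from by omega,
        show 3 * q + 8 - 5 = 3 * q + 3 from by omega,
        show 3 * q + 8 - 4 = 3 * q + 4 from by omega,
        show (2 : ℕ) ≤ 3 * q + 8 from by omega,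
        show (1 : ℕ) ≤ 3 * q + 8 from by omega,
        show (3 : ℕ) ≤ 3 * q + 8 from by omega,
        show (5 : ℕ) ≤ 3 * q + 8 from by omega,
        show (4 : ℕ) ≤ 3 * q + 8 from by omega,
        show (3 ∣ 3 * q + 6) from by omega,
        show ¬ (3 ∣ 3 * q + 7) from by omega,
        show ¬ (3 ∣ 3 * q + 5) from by omega,
        show ¬ (3 ∣ 3 * q + 8) from by omega,
        show (3 ∣ 3 * q + 3) from by omega,
        show ¬ (3 ∣ 3 * q + 4) from by omega,
        show (3 * q + 6) / 3 = q + 2 from by omega,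
        show (3 * q + 3) / 3 = q + 1 from by omega,
        show ¬ (3 * q + 8 = 1) from by omega,
        show ¬ (3 * q + 8 = 2) from by omega,
        if_true, if_false, ite_true, ite_false]
      rw [show 3 * q + 8 = 3 * (q + 2) + 2 from by ring,
        show 3 * q + 5 = 3 * (q + 1) + 2 from by ring, Acoef_mul3_add2, Acoef_mul3_add2]
      ring
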